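/- The Last Come, First Matched policy is sub-additive: for any two finite arrival words z' and z'', |Q_LCFM(z'z'')| ≤ |Q_LCFM(z')| + |Q_LCFM(z'')|. -/

import Mathlib

variable {V : Type*} [DecidableEq V]

/-- One step of Last Come, First Matched: the arriving item of class `v` is matched
with (removes) the most recently arrived compatible item of the buffer `w` (listed
oldest first), and joins the buffer if there is none. -/
def lcfmStep (G : SimpleGraph V) [DecidableRel G.Adj] (w : List V) (v : V) : List V :=
  match w.reverse.findIdx? (fun u => decide (G.Adj u v)) with
  | some k => (w.reverse.eraseIdx k).reverse
  | none => w ++ [v]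

/-- The buffer content after processing the arrival word `z` under LCFM from an empty
system. -/
def lcfmQ (G : SimpleGraph V) [DecidableRel G.Adj] (z : List V) : List V :=
  z.foldl (lcfmStep G) []

/-- One LCFM step on the reversed buffer (most recent item first). -/
def lcfmRStep (G : SimpleGraph V) [DecidableRel G.Adj] (r : List V) (v : V) : List V :=
  match r.findIdx? (fun u => decide (G.Adj u v)) with
  | some k => r.eraseIdx k
  | none => v :: r

lemma lcfmStep_reverse (G : SimpleGraph V) [DecidableRel G.Adj] (w : List V) (v : V) :
    (lcfmStep G w v).reverse = lcfmRStep G w.reverse v := by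
  unfold lcfmStep lcfmRStep
  cases h : w.reverse.findIdx? (fun u => decide (G.Adj u v)) with
  | none => simp [h]
  | some k => simp [h]

lemma foldl_lcfmStep_reverse (G : SimpleGraph V) [DecidableRel G.Adj] (z : List V) :
    ∀ w : List V, (z.foldl (lcfmStep G) w).reverse = z.foldl (lcfmRStep G) w.reverse := by
  induction z with
  | nil => intro w; simp
  | cons v z ih =>
      intro w
      simp only [List.foldl_cons, ih, lcfmStep_reverse]

/-- `Ins s r` : `r` is `s` with one extra element inserted somewhere. -/
def Ins (s r : List V) : Prop := ∃ l x t, r = l ++ x :: t ∧ s = l ++ t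

lemma Ins.length {s r : List V} (h : Ins s r) : r.length = s.length + 1 := by
  obtain ⟨l, x, t, rfl, rfl⟩ := h
  simp; omega

lemma ins_eraseIdx (t : List V) (k : ℕ) (hk : k < t.length) : Ins (t.eraseIdx k) t := by
  refine ⟨t.take k, t[k], t.drop (k + 1), ?_, ?_⟩
  · conv_lhs => rw [← List.take_append_drop k t, List.drop_eq_getElem_cons hk]
  · exact List.eraseIdx_eq_take_drop_succ t k

/-- Unfolding equations for `lcfmRStep`. -/
lemma lcfmRStep_some (G : SimpleGraph V) [DecidableRel G.Adj] {r : List V} {v : V} {k : ℕ}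
    (h : r.findIdx? (fun u => decide (G.Adj u v)) = some k) :
    lcfmRStep G r v = r.eraseIdx k := by
  unfold lcfmRStep; rw [h]

lemma lcfmRStep_none (G : SimpleGraph V) [DecidableRel G.Adj] {r : List V} {v : V}
    (h : r.findIdx? (fun u => decide (G.Adj u v)) = none) :
    lcfmRStep G r v = v :: r := by
  unfold lcfmRStep; rw [h]

/-- The one-insertion relation (in either direction) is preserved by an LCFM step. -/
lemma lcfmRStep_ins (G : SimpleGraph V) [DecidableRel G.Adj] {s r : List V} (v : V)
    (h : Ins s r) :
    Ins (lcfmRStep G s v) (lcfmRStep G r v) ∨ Ins (lcfmRStep G r v) (lcfmRStep G s v) ∨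
      lcfmRStep G s v = lcfmRStep G r v := by
  classical
  obtain ⟨l, x, t, rfl, rfl⟩ := h
  set p : V → Bool := fun u => decide (G.Adj u v) with hp
  cases hl : l.findIdx? p with
  | some k =>
      have hk : k < l.length := ((List.findIdx?_eq_some_iff_findIdx_eq).1 hl).1
      have Fr : (l ++ x :: t).findIdx? p = some k := by
        rw [List.findIdx?_append, hl]; rfl
      have Fs : (l ++ t).findIdx? p = some k := by
        rw [List.findIdx?_append, hl]; rfl
      rw [lcfmRStep_some G Fr, lcfmRStep_some G Fs,
        List.eraseIdx_append_of_lt_length hk, List.eraseIdx_append_of_lt_length hk]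
      exact Or.inl ⟨l.eraseIdx k, x, t, rfl, rfl⟩
  | none =>
      by_cases hx : p x = true
      · have Fr : (l ++ x :: t).findIdx? p = some l.length := by
          rw [List.findIdx?_append, hl, List.findIdx?_cons, hx]
          simp
        have hr : lcfmRStep G (l ++ x :: t) v = l ++ t := by
          rw [lcfmRStep_some G Fr,
            List.eraseIdx_append_of_length_le (le_refl l.length)]
          simp
        cases ht : t.findIdx? p with
        | some j =>
            have hj : j < t.length := ((List.findIdx?_eq_some_iff_findIdx_eq).1 ht).1
            have Fs : (l ++ t).findIdx? p = some (j + l.length) := by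
              rw [List.findIdx?_append, hl, ht]; rfl
            have hs : lcfmRStep G (l ++ t) v = l ++ t.eraseIdx j := by
              rw [lcfmRStep_some G Fs,
                List.eraseIdx_append_of_length_le (by omega : l.length ≤ j + l.length)]
              congr 1
              congr 1
              omega
            rw [hr, hs]
            refine Or.inl ?_
            obtain ⟨l', y, t', h1, h2⟩ := ins_eraseIdx t j hj
            exact ⟨l ++ l', y, t', by rw [h1, List.append_assoc],
              by rw [h2, List.append_assoc]⟩
        | none =>
            have Fs : (l ++ t).findIdx? p = none := by
              rw [List.findIdx?_append, hl, ht]; rfl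
            rw [hr, lcfmRStep_none G Fs]
            exact Or.inr (Or.inl ⟨[], v, l ++ t, rfl, rfl⟩)
      · have hx' : p x = false := by simpa using hx
        cases ht : t.findIdx? p with
        | some j =>
            have hj : j < t.length := ((List.findIdx?_eq_some_iff_findIdx_eq).1 ht).1
            have Fr : (l ++ x :: t).findIdx? p = some (j + 1 + l.length) := by
              rw [List.findIdx?_append, hl, List.findIdx?_cons, if_neg (by simp [hx']),
                ht]
              rfl
            have Fs : (l ++ t).findIdx? p = some (j + l.length) := by
              rw [List.findIdx?_append, hl, ht]; rfl
            have hr : lcfmRStep G (l ++ x :: t) v = l ++ x :: t.eraseIdx j := by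
              rw [lcfmRStep_some G Fr,
                List.eraseIdx_append_of_length_le (by omega : l.length ≤ j + 1 + l.length)]
              have : j + 1 + l.length - l.length = j + 1 := by omega
              rw [this, List.eraseIdx_cons_succ]
            have hs : lcfmRStep G (l ++ t) v = l ++ t.eraseIdx j := by
              rw [lcfmRStep_some G Fs,
                List.eraseIdx_append_of_length_le (by omega : l.length ≤ j + l.length)]
              have : j + l.length - l.length = j := by omega
              rw [this]
            rw [hr, hs]
            exact Or.inl ⟨l, x, t.eraseIdx j, rfl, rfl⟩
        | none =>
            have Fr : (l ++ x :: t).findIdx? p = none := by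
              rw [List.findIdx?_append, hl, List.findIdx?_cons, if_neg (by simp [hx']),
                ht]
              rfl
            have Fs : (l ++ t).findIdx? p = none := by
              rw [List.findIdx?_append, hl, ht]; rfl
            rw [lcfmRStep_none G Fr, lcfmRStep_none G Fs]
            exact Or.inl ⟨v :: l, x, t, rfl, rfl⟩

/-- The symmetric-or-equal closure of `Ins` is preserved along processing a word. -/
lemma foldl_lcfmRStep_ins (G : SimpleGraph V) [DecidableRel G.Adj] (z : List V) :
    ∀ {s r : List V}, Ins s r ∨ Ins r s ∨ s = r →
      Ins (z.foldl (lcfmRStep G) s) (z.foldl (lcfmRStep G) r) ∨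
        Ins (z.foldl (lcfmRStep G) r) (z.foldl (lcfmRStep G) s) ∨
          z.foldl (lcfmRStep G) s = z.foldl (lcfmRStep G) r := by
  induction z with
  | nil => intro s r h; simpa using h
  | cons v z ih =>
      intro s r h
      simp only [List.foldl_cons]
      rcases h with h | h | rfl
      · exact ih (lcfmRStep_ins G v h)
      · rcases lcfmRStep_ins G v h with h' | h' | h'
        · exact ih (Or.inr (Or.inl h'))
        · exact ih (Or.inl h')
        · exact ih (Or.inr (Or.inr h'.symm))
      · exact ih (Or.inr (Or.inr rfl))

lemma foldl_lcfmRStep_length_le (G : SimpleGraph V) [DecidableRel G.Adj] (z : List V) :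
    ∀ w : List V, (z.foldl (lcfmRStep G) w).length ≤
      w.length + (z.foldl (lcfmRStep G) []).length := by
  intro w
  induction w with
  | nil => simp
  | cons x w ih =>
      have h : Ins w (x :: w) ∨ Ins (x :: w) w ∨ w = x :: w :=
        Or.inl ⟨[], x, w, rfl, rfl⟩
      rcases foldl_lcfmRStep_ins G z h with h' | h' | h'
      · have := h'.length
        simp only [List.length_cons]
        omega
      · have := h'.length
        simp only [List.length_cons]
        omega
      · rw [← h']
        simp only [List.length_cons]
        omega

/-- **LCFM is sub-additive**: for any arrival words `z'`, `z''`,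
`|Q_LCFM(z'z'')| ≤ |Q_LCFM(z')| + |Q_LCFM(z'')|`. -/
theorem lcfm_subadditive (G : SimpleGraph V) [DecidableRel G.Adj]
    (z' z'' : List V) :
    (lcfmQ G (z' ++ z'')).length ≤ (lcfmQ G z').length + (lcfmQ G z'').length := by
  have key : ∀ w : List V, (z''.foldl (lcfmStep G) w).length ≤
      w.length + (lcfmQ G z'').length := by
    intro w
    have h1 : (z''.foldl (lcfmStep G) w).length =
        (z''.foldl (lcfmRStep G) w.reverse).length := by
      rw [← foldl_lcfmStep_reverse, List.length_reverse]
    have h2 : (lcfmQ G z'').length = (z''.foldl (lcfmRStep G) []).length := by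
      unfold lcfmQ
      rw [← List.length_reverse (as := z''.foldl (lcfmStep G) []), foldl_lcfmStep_reverse,
        List.reverse_nil]
    rw [h1, h2]
    have := foldl_lcfmRStep_length_le G z'' w.reverse
    simpa using this
  unfold lcfmQ
  rw [List.foldl_append]
  exact key (z'.foldl (lcfmStep G) [])
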